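/- For k ≥ 4, let T_k be the tree obtained from the star K_{1,k} by subdividing every edge exactly three times; explicitly T_k has center v and paths v u_i v_i w_i x_i for i = 1,...,k. Then the induced matching number of T_k equals k + 1. -/
import Mathlib


variable {V : Type*}

/-- `S` is a total dominating set of `G`: every vertex has a neighbor in `S`. -/
def isTDSet (G : SimpleGraph V) (S : Set V) : Prop := ∀ v : V, ∃ u ∈ S, G.Adj v u

/-- `S` is a minimal total dominating set of `G`. -/
def isMinTDSet (G : SimpleGraph V) (S : Set V) : Prop :=
  isTDSet G S ∧ ∀ T : Set V, T ⊂ S → ¬ isTDSet G T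

/-- Upper total domination number `Γ_t`. -/
noncomputable def upperTD (G : SimpleGraph V) [Fintype V] : ℕ :=
  sSup {n | ∃ S : Finset V, isMinTDSet G ↑S ∧ S.card = n}

/-- Total domination number `γ_t`. -/
noncomputable def totalDomNum (G : SimpleGraph V) [Fintype V] : ℕ :=
  sInf {n | ∃ S : Finset V, isTDSet G ↑S ∧ S.card = n}

/-- `S` is an open-open irredundant set: each `v ∈ S` has a neighbor not adjacent
to any other vertex of `S`, i.e. `N(v) \ N(S \ {v}) ≠ ∅`. -/
def isOOIrr (G : SimpleGraph V) (S : Set V) : Prop :=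
  ∀ v ∈ S, ∃ w, G.Adj v w ∧ ∀ u ∈ S, u ≠ v → ¬ G.Adj u w

/-- Open-open irredundance number `OOIR`. -/
noncomputable def ooirNum (G : SimpleGraph V) [Fintype V] : ℕ :=
  sSup {n | ∃ S : Finset V, isOOIrr G ↑S ∧ S.card = n}

/-- `M` is an induced matching: a set of edges of `G` whose endpoints induce a
1-regular subgraph (no two distinct edges share or join endpoints). -/
def isInducedMatching (G : SimpleGraph V) (M : Set (Sym2 V)) : Prop :=
  (∀ e ∈ M, e ∈ G.edgeSet) ∧
  ∀ e ∈ M, ∀ f ∈ M, e ≠ f → ∀ u ∈ e, ∀ v ∈ f, u ≠ v ∧ ¬ G.Adj u v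

/-- Induced matching number `ν_I`. -/
noncomputable def inducedMatchingNum (G : SimpleGraph V) [Fintype V] : ℕ :=
  sSup {n | ∃ M : Finset (Sym2 V), isInducedMatching G ↑M ∧ M.card = n}

/-- `L` is a total dominating sequence of `G`. -/
def isTDSeq (G : SimpleGraph V) (L : List V) : Prop :=
  L.Nodup ∧ isTDSet G {v | v ∈ L} ∧
  ∀ (i : ℕ) (h : i < L.length), ∃ w, G.Adj L[i] w ∧ ∀ u ∈ L.take i, ¬ G.Adj u w

/-- Grundy total domination number. -/
noncomputable def grundyTD (G : SimpleGraph V) [Fintype V] : ℕ :=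
  sSup {n | ∃ L : List V, isTDSeq G L ∧ L.length = n}


/-- The tree obtained from `K_{1,k}` by subdividing every edge three times: center
`v = Sum.inl ()` and paths `v, (i,0), (i,1), (i,2), (i,3)`, i.e. `v u_i v_i w_i x_i`. -/
def T3star (k : ℕ) : SimpleGraph (Unit ⊕ Fin k × Fin 4) :=
  SimpleGraph.fromRel (fun a b =>
    match a, b with
    | Sum.inl _, Sum.inr p => p.2 = 0
    | Sum.inr p, Sum.inr q => p.1 = q.1 ∧ (p.2 : ℕ) + 1 = (q.2 : ℕ)
    | _, _ => False)

lemma adj_center {k} (i : Fin k) (j : Fin 4) :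
    (T3star k).Adj (Sum.inl ()) (Sum.inr (i, j)) ↔ j = 0 := by
  simp [T3star, SimpleGraph.fromRel_adj]

lemma adj_center' {k} (i : Fin k) (j : Fin 4) :
    (T3star k).Adj (Sum.inr (i, j)) (Sum.inl ()) ↔ j = 0 := by
  simp [T3star, SimpleGraph.fromRel_adj]

lemma not_adj_center {k} : ¬ (T3star k).Adj (Sum.inl ()) (Sum.inl ()) := by
  simp [T3star, SimpleGraph.fromRel_adj]

lemma adj_inr {k} (p q : Fin k × Fin 4) :
    (T3star k).Adj (Sum.inr p) (Sum.inr q) ↔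
      p.1 = q.1 ∧ ((p.2 : ℕ) + 1 = q.2 ∨ (q.2 : ℕ) + 1 = p.2) := by
  simp only [T3star, SimpleGraph.fromRel_adj]
  constructor
  · rintro ⟨-, h | h⟩
    · exact ⟨h.1, Or.inl h.2⟩
    · exact ⟨h.1.symm, Or.inr h.2⟩
  · rintro ⟨h1, h2 | h2⟩
    · refine ⟨?_, Or.inl ⟨h1, h2⟩⟩
      intro h; cases h; omega
    · refine ⟨?_, Or.inr ⟨h1.symm, h2⟩⟩
      intro h; cases h; omega

lemma edge_class {k} {e : Sym2 (Unit ⊕ Fin k × Fin 4)} (he : e ∈ (T3star k).edgeSet) :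
    (∃ i : Fin k, e = s(Sum.inl (), Sum.inr (i, 0))) ∨
    (∃ (i : Fin k) (a b : Fin 4), (a : ℕ) + 1 = (b : ℕ) ∧
      e = s(Sum.inr (i, a), Sum.inr (i, b))) := by
  induction e using Sym2.ind with
  | _ x y =>
    rw [SimpleGraph.mem_edgeSet] at he
    match x, y with
    | Sum.inl u, Sum.inl u' => exact absurd he (by cases u; cases u'; exact not_adj_center)
    | Sum.inl u, Sum.inr (i, j) =>
      cases u
      rw [adj_center] at he
      exact Or.inl ⟨i, by rw [he]⟩
    | Sum.inr (i, j), Sum.inl u =>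
      cases u
      rw [adj_center'] at he
      exact Or.inl ⟨i, by rw [he, Sym2.eq_swap]⟩
    | Sum.inr p, Sum.inr q =>
      rw [adj_inr] at he
      obtain ⟨i, a⟩ := p
      obtain ⟨i', b⟩ := q
      obtain ⟨h1, h2 | h2⟩ := he
      all_goals simp only at h1 h2; subst h1
      · exact Or.inr ⟨i, a, b, h2, rfl⟩
      · exact Or.inr ⟨i, b, a, h2, Sym2.eq_swap⟩

/-- branch map -/
def bm {k : ℕ} : Sym2 (Unit ⊕ Fin k × Fin 4) → Unit ⊕ Fin k :=
  Sym2.lift ⟨fun a b =>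
    match a, b with
    | Sum.inr p, Sum.inr q => if p.1 = q.1 then Sum.inr p.1 else Sum.inl ()
    | _, _ => Sum.inl (),
    by
      intro a b
      rcases a with u | ⟨i, x⟩ <;> rcases b with u' | ⟨i', y⟩
      · rfl
      · rfl
      · rfl
      · show (if i = i' then (Sum.inr i : Unit ⊕ Fin k) else Sum.inl ()) =
            (if i' = i then (Sum.inr i' : Unit ⊕ Fin k) else Sum.inl ())
        by_cases h : i = i'
        · subst h; rfl
        · rw [if_neg h, if_neg (Ne.symm h)]⟩

@[simp] lemma bm_center {k} (i : Fin k) (u : Unit) (j : Fin 4) :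
    bm s(Sum.inl u, Sum.inr (i, j)) = Sum.inl () := rfl

@[simp] lemma bm_branch {k} (i : Fin k) (a b : Fin 4) :
    bm s(Sum.inr (i, a), Sum.inr (i, b)) = Sum.inr i := by
  show (if i = i then (Sum.inr i : Unit ⊕ Fin k) else Sum.inl ()) = Sum.inr i
  rw [if_pos rfl]

lemma upper_bound {k : ℕ} (M : Finset (Sym2 (Unit ⊕ Fin k × Fin 4)))
    (hM : isInducedMatching (T3star k) ↑M) : M.card ≤ k + 1 := by
  have hinj : Set.InjOn (bm (k := k)) ↑M := by
    intro e he f hf hgf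
    by_contra hne
    have hmem : ∀ u, u ∈ e → ∀ v, v ∈ f → u ≠ v ∧ ¬ (T3star k).Adj u v :=
      hM.2 e he f hf hne
    rcases edge_class (hM.1 e he) with ⟨i, rfl⟩ | ⟨i, a, b, hab, rfl⟩ <;>
      rcases edge_class (hM.1 f hf) with ⟨j, rfl⟩ | ⟨j, c, d, hcd, rfl⟩
    · exact (hmem _ (Sym2.mem_mk_left _ _) _ (Sym2.mem_mk_left _ _)).1 rfl
    · rw [bm_center, bm_branch] at hgf; exact absurd hgf (by simp)
    · rw [bm_center, bm_branch] at hgf; exact absurd hgf (by simp)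
    · rw [bm_branch, bm_branch] at hgf
      obtain rfl : i = j := by injection hgf
      have h1 := hmem _ (Sym2.mem_mk_right _ _) _ (Sym2.mem_mk_left _ _)
      have h2 := hmem _ (Sym2.mem_mk_left _ _) _ (Sym2.mem_mk_right _ _)
      have h3 := hmem _ (Sym2.mem_mk_left _ _) _ (Sym2.mem_mk_left _ _)
      have h4 := hmem _ (Sym2.mem_mk_right _ _) _ (Sym2.mem_mk_right _ _)
      simp only [adj_inr, ne_eq, Sum.inr.injEq, Prod.mk.injEq, not_and, not_or, true_and, and_imp] at h1 h2 h3 h4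
      have hb := b.isLt
      have hd := d.isLt
      have e1 : (b : ℕ) ≠ c := fun h => h1.1 (Fin.ext h)
      have e3 : (a : ℕ) ≠ c := fun h => h3.1 (Fin.ext h)
      obtain ⟨-, n1, n2⟩ := h1
      obtain ⟨-, n3, n4⟩ := h2
      omega

  calc M.card ≤ (Finset.univ : Finset (Unit ⊕ Fin k)).card :=
        Finset.card_le_card_of_injOn bm (fun _ _ => Finset.mem_univ _) hinj
    _ = k + 1 := by simp [Fintype.card_sum]; omega

lemma lower_matching {k : ℕ} (hk : 0 < k) :
    ∃ M : Finset (Sym2 (Unit ⊕ Fin k × Fin 4)),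
      isInducedMatching (T3star k) ↑M ∧ M.card = k + 1 := by
  set c0 : Fin k := ⟨0, hk⟩ with hc0
  set e0 : Sym2 (Unit ⊕ Fin k × Fin 4) := s(Sum.inl (), Sum.inr (c0, 0)) with he0
  set F : Fin k → Sym2 (Unit ⊕ Fin k × Fin 4) :=
    fun i => s(Sum.inr (i, 2), Sum.inr (i, 3)) with hF
  have hFinj : Function.Injective F := by
    intro x y hxy
    rw [hF] at hxy
    simp only [Sym2.eq, Sym2.rel_iff', Sum.inr.injEq, Prod.mk.injEq, Prod.swap_prod_mk] at hxy
    rcases hxy with ⟨⟨h, -⟩, -⟩ | ⟨⟨-, h⟩, -⟩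
    · exact h
    · exact absurd h (by decide)
  have h0 : e0 ∉ Finset.image F Finset.univ := by
    simp only [Finset.mem_image, Finset.mem_univ, true_and, not_exists, he0, hF]
    intro i h
    simp only [Sym2.eq, Sym2.rel_iff', Sum.inr.injEq, Prod.mk.injEq, Prod.swap_prod_mk] at h
    rcases h with ⟨h, -⟩ | ⟨h, -⟩ <;> simp_all
  refine ⟨insert e0 (Finset.image F Finset.univ), ⟨?_, ?_⟩, ?_⟩
  · intro e he
    simp only [Finset.coe_insert, Set.mem_insert_iff, Finset.coe_image, Finset.coe_univ,
      Set.image_univ, Set.mem_range] at he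
    rcases he with rfl | ⟨i, rfl⟩
    · rw [he0, SimpleGraph.mem_edgeSet, adj_center]
    · rw [hF, SimpleGraph.mem_edgeSet, adj_inr]
      exact ⟨rfl, Or.inl rfl⟩
  · intro e he f hf hne u hu v hv
    simp only [Finset.coe_insert, Set.mem_insert_iff, Finset.coe_image, Finset.coe_univ,
      Set.image_univ, Set.mem_range] at he hf
    rcases he with rfl | ⟨i, rfl⟩ <;> rcases hf with rfl | ⟨j, rfl⟩
    · exact absurd rfl hne
    · rw [he0, Sym2.mem_iff] at hu
      rw [hF, Sym2.mem_iff] at hv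
      rcases hu with rfl | rfl <;> rcases hv with rfl | rfl
      · exact ⟨by simp, by rw [adj_center]; decide⟩
      · exact ⟨by simp, by rw [adj_center]; decide⟩
      · refine ⟨by simp, ?_⟩
        rw [adj_inr]
        rintro ⟨-, h | h⟩ <;> (try simp at h) <;> exact absurd h (by decide)
      · refine ⟨by simp, ?_⟩
        rw [adj_inr]
        rintro ⟨-, h | h⟩ <;> (try simp at h) <;> exact absurd h (by decide)
    · rw [hF, Sym2.mem_iff] at hu
      rw [he0, Sym2.mem_iff] at hv
      rcases hu with rfl | rfl <;> rcases hv with rfl | rfl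
      · exact ⟨by simp, by rw [adj_center']; decide⟩
      · refine ⟨by simp, ?_⟩
        rw [adj_inr]
        rintro ⟨-, h | h⟩ <;> (try simp at h) <;> exact absurd h (by decide)
      · exact ⟨by simp, by rw [adj_center']; decide⟩
      · refine ⟨by simp, ?_⟩
        rw [adj_inr]
        rintro ⟨-, h | h⟩ <;> (try simp at h) <;> exact absurd h (by decide)
    · have hij : i ≠ j := by rintro rfl; exact hne rfl
      rw [hF, Sym2.mem_iff] at hu hv
      rcases hu with rfl | rfl <;> rcases hv with rfl | rfl <;>
        exact ⟨by simp [hij], by simp [adj_inr, hij]⟩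
  · rw [Finset.card_insert_of_notMem h0, Finset.card_image_of_injective _ hFinj,
      Finset.card_univ, Fintype.card_fin]

/-- For `k ≥ 4`, `ν_I(T_k) = k + 1` for the thrice-subdivided star. -/
theorem stmt13 (k : ℕ) (hk : 4 ≤ k) : inducedMatchingNum (T3star k) = k + 1 := by
  obtain ⟨M, hM, hcard⟩ := lower_matching (k := k) (by omega)
  have hub : ∀ n ∈ {n | ∃ N : Finset (Sym2 (Unit ⊕ Fin k × Fin 4)),
      isInducedMatching (T3star k) ↑N ∧ N.card = n}, n ≤ k + 1 := by
    rintro n ⟨N, hN, rfl⟩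
    exact upper_bound N hN
  refine le_antisymm (csSup_le ⟨k + 1, M, hM, hcard⟩ hub) (le_csSup ⟨k + 1, hub⟩ ⟨M, hM, hcard⟩)
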